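/- Fix the number of voters n and the committee size k, and let m ≥ k. If there exists a weakly efficient, proportional, and strategyproof committee rule for m+1 candidates (with n voters and committee size k), then there also exists a weakly efficient, proportional, and strategyproof committee rule for m candidates (with n voters and committee size k). -/

import Mathlib

open scoped Classical

/-!
Common framework: candidates are `Fin m`, voters are `Fin n`, committee size `k`.
An approval ballot is a nonempty proper subset of the candidate set.
"at least n/k voters" is encoded as `n ≤ k * (number of such voters)`,
and "strictly more than n/(k+1) voters" as `n < (k+1) * (number of such voters)`.
-/

/-- A valid approval ballot: a nonempty proper subset of the candidate set. -/
def ValidBallot (m : ℕ) (A : Finset (Fin m)) : Prop :=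
  A.Nonempty ∧ A ≠ Finset.univ

/-- A valid profile: every voter submits a valid ballot, and the ballots jointly
approve at least `k` candidates (so the committee can be filled with approved candidates). -/
def ValidProfile (m n k : ℕ) (P : Fin n → Finset (Fin m)) : Prop :=
  (∀ i, ValidBallot m (P i)) ∧ k ≤ (Finset.univ.biUnion P).card

/-- `f` is an (approval-based) committee rule: on every valid profile it returns a
committee of cardinality `k`. -/
def IsCommitteeRule (m n k : ℕ) (f : (Fin n → Finset (Fin m)) → Finset (Fin m)) : Prop :=
  ∀ P, ValidProfile m n k P → (f P).card = k

/-- `P'` is an `i`-variant of `P`: they agree on all voters other than `i`. -/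
def IVariant {m n : ℕ} (P P' : Fin n → Finset (Fin m)) (i : Fin n) : Prop :=
  ∀ j, j ≠ i → P' j = P j

/-- Strategyproofness: a voter reporting a proper subset of her truthful ballot never
obtains a committee whose intersection with her truthful ballot strictly grows. -/
def Strategyproof (m n k : ℕ) (f : (Fin n → Finset (Fin m)) → Finset (Fin m)) : Prop :=
  ∀ P P' (i : Fin n), ValidProfile m n k P → ValidProfile m n k P' →
    IVariant P P' i → P' i ⊂ P i → ¬ (f P ∩ P i ⊂ f P' ∩ P i)

/-- Superset-strategyproofness: no i-variant (with arbitrary new ballot) yields a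
committee whose intersection with the truthful ballot strictly grows. -/
def SupersetStrategyproof (m n k : ℕ) (f : (Fin n → Finset (Fin m)) → Finset (Fin m)) : Prop :=
  ∀ P P' (i : Fin n), ValidProfile m n k P → ValidProfile m n k P' →
    IVariant P P' i → ¬ (f P ∩ P i ⊂ f P' ∩ P i)

/-- Cardinality-strategyproofness: no i-variant yields a committee containing strictly
more of the truthfully approved candidates. -/
def CardinalityStrategyproof (m n k : ℕ) (f : (Fin n → Finset (Fin m)) → Finset (Fin m)) : Prop :=
  ∀ P P' (i : Fin n), ValidProfile m n k P → ValidProfile m n k P' →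
    IVariant P P' i → ¬ ((f P ∩ P i).card < (f P' ∩ P i).card)

/-- Hamming-strategyproofness: no i-variant yields a committee at strictly smaller
Hamming distance (cardinality of the symmetric difference) from the truthful ballot. -/
def HammingStrategyproof (m n k : ℕ) (f : (Fin n → Finset (Fin m)) → Finset (Fin m)) : Prop :=
  ∀ P P' (i : Fin n), ValidProfile m n k P → ValidProfile m n k P' →
    IVariant P P' i → ¬ ((symmDiff (f P') (P i)).card < (symmDiff (f P) (P i)).card)

/-- A party-list profile: any two ballots are either equal or disjoint. -/
def PartyList {m n : ℕ} (P : Fin n → Finset (Fin m)) : Prop :=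
  ∀ i j, P i = P j ∨ Disjoint (P i) (P j)

/-- Proportionality: in a party-list profile where some singleton ballot `{c}` is
submitted by at least `n/k` voters, `c` is elected. -/
def Proportional (m n k : ℕ) (f : (Fin n → Finset (Fin m)) → Finset (Fin m)) : Prop :=
  ∀ P, ValidProfile m n k P → PartyList P →
    ∀ c : Fin m, n ≤ k * (Finset.univ.filter (fun i => P i = {c})).card → c ∈ f P

/-- Droop proportionality: in ANY profile where some singleton ballot `{c}` is submitted
by strictly more than `n/(k+1)` voters, `c` is elected. -/
def DroopProportional (m n k : ℕ) (f : (Fin n → Finset (Fin m)) → Finset (Fin m)) : Prop :=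
  ∀ P, ValidProfile m n k P →
    ∀ c : Fin m, n < (k + 1) * (Finset.univ.filter (fun i => P i = {c})).card → c ∈ f P

/-- Justified representation on party lists: in a party-list profile where some ballot `A`
is submitted by at least `n/k` voters, the committee intersects `A`. -/
def JROnPartyLists (m n k : ℕ) (f : (Fin n → Finset (Fin m)) → Finset (Fin m)) : Prop :=
  ∀ P, ValidProfile m n k P → PartyList P →
    ∀ A : Finset (Fin m), n ≤ k * (Finset.univ.filter (fun i => P i = A)).card →
      (f P ∩ A).Nonempty

/-- Justified representation: every group of at least `n/k` voters that jointly approve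
some common candidate is represented by at least one committee member approved by a
group member. -/
def JR (m n k : ℕ) (f : (Fin n → Finset (Fin m)) → Finset (Fin m)) : Prop :=
  ∀ P, ValidProfile m n k P → ∀ N' : Finset (Fin n),
    n ≤ k * N'.card → (∃ c : Fin m, ∀ i ∈ N', c ∈ P i) →
    (f P ∩ N'.biUnion P).Nonempty

/-- Disjoint diversity: in a party-list profile with at most `k` distinct parties,
the committee contains a member of each party. -/
def DisjointDiversity (m n k : ℕ) (f : (Fin n → Finset (Fin m)) → Finset (Fin m)) : Prop :=
  ∀ P, ValidProfile m n k P → PartyList P →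
    (Finset.univ.image P).card ≤ k → ∀ i : Fin n, (f P ∩ P i).Nonempty

/-- Weak efficiency: a candidate approved by no voter is never elected
(on profiles where the committee can be filled with approved candidates). -/
def WeakEfficiency (m n k : ℕ) (f : (Fin n → Finset (Fin m)) → Finset (Fin m)) : Prop :=
  ∀ P, ValidProfile m n k P → ∀ c : Fin m, (∀ i, c ∉ P i) → c ∉ f P

/-- The approval score of candidate `c`: the number of voters approving `c`. -/
def avScore (m n : ℕ) (P : Fin n → Finset (Fin m)) (c : Fin m) : ℕ :=
  (Finset.univ.filter (fun i => c ∈ P i)).card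

/-- `W` is the committee selected by Approval Voting with lexicographic tie-breaking:
it has size `k`, and every member beats every non-member, either by a strictly higher
approval score or by equal score and smaller index (lexicographic tie-breaking with
respect to the fixed linear order on the candidates `Fin m`). -/
def IsAVCommittee (m n k : ℕ) (P : Fin n → Finset (Fin m)) (W : Finset (Fin m)) : Prop :=
  W.card = k ∧ ∀ c ∈ W, ∀ d : Fin m, d ∉ W →
    (avScore m n P d < avScore m n P c ∨ (avScore m n P d = avScore m n P c ∧ c < d))

/-- Approval Voting with lexicographic tie-breaking: selects the `k` candidates with
highest approval score, breaking ties in favour of lexicographically smaller candidates. -/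
noncomputable def AV (m n k : ℕ) (P : Fin n → Finset (Fin m)) : Finset (Fin m) :=
  if h : ∃ W, IsAVCommittee m n k P W then h.choose else ∅

/-- The harmonic number `H r = 1 + 1/2 + ⋯ + 1/r`, with `H 0 = 0`. -/
def harm : ℕ → ℚ
  | 0 => 0
  | r + 1 => harm r + 1 / (r + 1)

/-- The PAV score of committee `W` in profile `P`: `∑ᵢ H(|P i ∩ W|)`. -/
def pavScore (m n : ℕ) (P : Fin n → Finset (Fin m)) (W : Finset (Fin m)) : ℚ :=
  ∑ i, harm ((P i ∩ W).card)

/-- Encoding used for lexicographic comparison of committees: a committee is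
lexicographically earlier iff its encoding is larger. -/
def pavEncode (m : ℕ) (W : Finset (Fin m)) : ℕ :=
  ∑ c ∈ W, 2 ^ (m - 1 - (c : ℕ))

/-- `W` is the PAV winner: a size-`k` committee maximizing the PAV score, and the
lexicographically first among all such maximizers. -/
def IsPAVWinner (m n k : ℕ) (P : Fin n → Finset (Fin m)) (W : Finset (Fin m)) : Prop :=
  W.card = k ∧
  (∀ W' : Finset (Fin m), W'.card = k → pavScore m n P W' ≤ pavScore m n P W) ∧
  (∀ W' : Finset (Fin m), W'.card = k → pavScore m n P W' = pavScore m n P W →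
    pavEncode m W' ≤ pavEncode m W)

/-- Proportional Approval Voting, breaking ties by the lexicographically first optimum. -/
noncomputable def PAV (m n k : ℕ) (P : Fin n → Finset (Fin m)) : Finset (Fin m) :=
  if h : ∃ W, IsPAVWinner m n k P W then h.choose else ∅

namespace Lemma4Aux

noncomputable def emb (m : ℕ) : Fin m ↪ Fin (m + 1) :=
  ⟨Fin.castSucc, Fin.castSucc_injective m⟩

noncomputable def ext {m n : ℕ} (P : Fin n → Finset (Fin m)) : Fin n → Finset (Fin (m + 1)) :=
  fun i => (P i).map (emb m)

lemma mem_ext {m n : ℕ} (P : Fin n → Finset (Fin m)) (i : Fin n) (c : Fin m) :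
    c.castSucc ∈ ext P i ↔ c ∈ P i := by
  constructor
  · intro h
    obtain ⟨a, ha, hae⟩ := Finset.mem_map.mp h
    exact (Fin.castSucc_injective m hae) ▸ ha
  · intro h; exact Finset.mem_map.mpr ⟨c, h, rfl⟩

lemma last_not_mem_ext {m n : ℕ} (P : Fin n → Finset (Fin m)) (i : Fin n) :
    Fin.last m ∉ ext P i := by
  simp only [ext, emb, Finset.mem_map, Function.Embedding.coeFn_mk]
  rintro ⟨c, _, h⟩
  exact (Fin.castSucc_lt_last c).ne h

lemma ext_valid {m n k : ℕ} (P : Fin n → Finset (Fin m)) (h : ValidProfile m n k P) :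
    ValidProfile (m + 1) n k (ext P) := by
  constructor
  · intro i
    refine ⟨((h.1 i).1).map, ?_⟩
    intro heq
    exact last_not_mem_ext P i (heq ▸ Finset.mem_univ _)
  · have : (Finset.univ.biUnion (ext P)) = (Finset.univ.biUnion P).map (emb m) := by
      ext x
      simp only [Finset.mem_biUnion, Finset.mem_univ, true_and, ext, Finset.mem_map]
      constructor
      · rintro ⟨i, a, ha, rfl⟩; exact ⟨a, ⟨i, ha⟩, rfl⟩
      · rintro ⟨a, ⟨i, ha⟩, rfl⟩; exact ⟨i, a, ha, rfl⟩
    rw [this, Finset.card_map]; exact h.2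

end Lemma4Aux

/-- **Lemma 4 (induction step on `m`).** Fix `n` and `k`, and let `m ≥ k`. If there
exists a weakly efficient, proportional, and strategyproof committee rule for `m + 1`
candidates, then there also exists such a rule for `m` candidates. -/



theorem induction_step_m (n k m : ℕ) (hm : k ≤ m) :
    (∃ f : (Fin n → Finset (Fin (m + 1))) → Finset (Fin (m + 1)),
        IsCommitteeRule (m + 1) n k f ∧ WeakEfficiency (m + 1) n k f ∧
        Proportional (m + 1) n k f ∧ Strategyproof (m + 1) n k f) →
    (∃ f : (Fin n → Finset (Fin m)) → Finset (Fin m),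
        IsCommitteeRule m n k f ∧ WeakEfficiency m n k f ∧
        Proportional m n k f ∧ Strategyproof m n k f) := by
  rintro ⟨f, hrule, heff, hprop, hsp⟩
  classical
  set g : (Fin n → Finset (Fin m)) → Finset (Fin m) :=
    fun P => Finset.univ.filter (fun c => Fin.castSucc c ∈ f (Lemma4Aux.ext P)) with hg
  have key : ∀ P, ValidProfile m n k P →
      (g P).map (Lemma4Aux.emb m) = f (Lemma4Aux.ext P) := by
    intro P hP
    ext x
    simp only [hg, Finset.mem_map, Finset.mem_filter, Finset.mem_univ, true_and,
      Lemma4Aux.emb, Function.Embedding.coeFn_mk]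
    constructor
    · rintro ⟨c, hc, rfl⟩; exact hc
    · intro hx
      have hne : x ≠ Fin.last m := by
        rintro rfl
        exact heff (Lemma4Aux.ext P) (Lemma4Aux.ext_valid P hP) _
          (fun i => Lemma4Aux.last_not_mem_ext P i) hx
      obtain ⟨c, rfl⟩ := Fin.exists_castSucc_eq.mpr hne
      exact ⟨c, hx, rfl⟩
  refine ⟨g, ?_, ?_, ?_, ?_⟩
  · -- committee rule
    intro P hP
    have := hrule (Lemma4Aux.ext P) (Lemma4Aux.ext_valid P hP)
    rw [← key P hP, Finset.card_map] at this
    exact this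
  · -- weak efficiency
    intro P hP c hc
    simp only [hg, Finset.mem_filter, Finset.mem_univ, true_and]
    exact heff (Lemma4Aux.ext P) (Lemma4Aux.ext_valid P hP) _
      (fun i => by rw [Lemma4Aux.mem_ext]; exact hc i)
  · -- proportionality
    intro P hP hPL c hc
    have hPL' : PartyList (Lemma4Aux.ext P) := by
      intro i j
      rcases hPL i j with h | h
      · left; simp [Lemma4Aux.ext, h]
      · right; simpa [Lemma4Aux.ext, Finset.disjoint_map] using h
    have hfilter : (Finset.univ.filter (fun i => Lemma4Aux.ext P i = {c.castSucc})) =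
        (Finset.univ.filter (fun i => P i = {c})) := by
      apply Finset.filter_congr
      intro i _
      constructor
      · intro h
        apply Finset.map_injective (Lemma4Aux.emb m)
        rw [show (Lemma4Aux.ext P i) = (P i).map (Lemma4Aux.emb m) from rfl] at h
        rw [h, Finset.map_singleton]; rfl
      · intro h
        show (P i).map (Lemma4Aux.emb m) = {c.castSucc}
        rw [h, Finset.map_singleton]; rfl
    have := hprop (Lemma4Aux.ext P) (Lemma4Aux.ext_valid P hP) hPL' c.castSucc
      (by rw [hfilter]; exact hc)
    simp only [hg, Finset.mem_filter, Finset.mem_univ, true_and]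
    exact this
  · -- strategyproofness
    intro P P' i hP hP' hvar hsub hcon
    have hvar' : IVariant (Lemma4Aux.ext P) (Lemma4Aux.ext P') i := by
      intro j hj; simp [Lemma4Aux.ext, hvar j hj]
    have hsub' : Lemma4Aux.ext P' i ⊂ Lemma4Aux.ext P i := by
      simpa [Lemma4Aux.ext, Finset.map_ssubset_map] using hsub
    refine hsp (Lemma4Aux.ext P) (Lemma4Aux.ext P') i
      (Lemma4Aux.ext_valid P hP) (Lemma4Aux.ext_valid P' hP') hvar' hsub' ?_
    have h1 : f (Lemma4Aux.ext P) ∩ Lemma4Aux.ext P i =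
        ((g P ∩ P i).map (Lemma4Aux.emb m)) := by
      rw [Finset.map_inter, key P hP]; rfl
    have h2 : f (Lemma4Aux.ext P') ∩ Lemma4Aux.ext P i =
        ((g P' ∩ P i).map (Lemma4Aux.emb m)) := by
      rw [Finset.map_inter, key P' hP']; rfl
    rw [h1, h2, Finset.map_ssubset_map]
    exact hcon
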